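/- arXiv:2206.11094 — 4 statements merged into one kernel-verified Lean document; each statement's English description precedes it below -/
import Mathlib

section
/- For every probability density f on the positive reals that is weakly decreasing and left continuous, there exists a probability measure ν on (0,∞) such that f(x) = ∫_{(0,∞)} (1/y)·1_{[0,y]}(x) ν(dy) for all x > 0; i.e., every distribution on (0,∞) with weakly decreasing density is a mixture of uniform distributions on intervals [0,y]. -/
open MeasureTheory Set Filter Topology

/-- Every distribution on (0,∞) with a weakly decreasing, left continuous density
is a mixture of uniform distributions on intervals [0,y]. -/
theorem mixture_of_uniforms_of_decreasing_density
    (f : ℝ → ℝ)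
    (hnn : ∀ x, 0 < x → 0 ≤ f x)
    (hdec : ∀ x y, 0 < x → x ≤ y → f y ≤ f x)
    (hlc : ∀ x, 0 < x → Filter.Tendsto f (nhdsWithin x (Set.Iio x)) (nhds (f x)))
    (hint : ∫ x in Set.Ioi (0:ℝ), f x = 1) :
    ∃ ν : Measure ℝ, IsProbabilityMeasure ν ∧ ν (Set.Iic 0) = 0 ∧
      ∀ x, 0 < x →
        f x = ∫ y in Set.Ioi (0:ℝ),
          (1 / y) * Set.indicator (Set.Icc 0 y) (fun _ => (1:ℝ)) x ∂ν := by
  have hInt : IntegrableOn f (Ioi 0) := by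
    by_contra h
    rw [MeasureTheory.integral_undef h] at hint
    norm_num at hint
  -- f tends to 0 at infinity
  have ftop : Tendsto f atTop (𝓝 0) := by
    set g : ℝ → ℝ := fun x => f (max x 1) with hg
    have hmaxpos : ∀ x : ℝ, (0:ℝ) < max x 1 := fun x =>
      lt_of_lt_of_le one_pos (le_max_right x 1)
    have ganti : Antitone g := fun x y hxy => hdec _ _ (hmaxpos x) (max_le_max hxy le_rfl)
    have gbdd : BddBelow (range g) := ⟨0, by rintro v ⟨x, rfl⟩; exact hnn _ (hmaxpos x)⟩
    have gtend : Tendsto g atTop (𝓝 (⨅ x, g x)) := tendsto_atTop_ciInf ganti gbdd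
    have hL0 : (⨅ x, g x) = 0 := by
      refine le_antisymm ?_ (le_ciInf fun x => hnn _ (hmaxpos x))
      by_contra hL
      push_neg at hL
      have hconst : IntegrableOn (fun _ : ℝ => (⨅ x, g x)) (Ioi 1) := by
        refine Integrable.mono (hInt.mono_set (fun x hx => mem_Ioi.2 (lt_trans one_pos (mem_Ioi.1 hx))))
          aestronglyMeasurable_const ?_
        refine (ae_restrict_iff' measurableSet_Ioi).2 (Eventually.of_forall fun x hx => ?_)
        have h1 : (⨅ x, g x) ≤ f x := by
          have h2 := ciInf_le gbdd x
          simpa [hg, sup_eq_left.2 (le_of_lt (mem_Ioi.1 hx))] using h2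
      -- contradiction
        rw [Real.norm_of_nonneg (le_of_lt hL), Real.norm_of_nonneg (le_trans (le_of_lt hL) h1)]
        exact h1
      rcases integrable_const_iff.1 hconst with h | h
      · exact absurd h (ne_of_gt hL)
      · rw [isFiniteMeasure_restrict, Real.volume_Ioi] at h
        exact absurd h (by simp)
    have hfg : g =ᶠ[atTop] f := (eventually_ge_atTop (1:ℝ)).mono fun x hx => by
      rw [hg]; simp [max_eq_left hx]
    rw [hL0] at gtend
    exact gtend.congr' hfg
  -- The Stieltjes function
  set F : ℝ → ℝ := fun t => if 0 < t then f t⁻¹ else 0 with hF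
  have Fmono : Monotone F := by
    intro a b hab
    rw [hF]
    dsimp only
    split_ifs with ha hb hb
    · refine hdec _ _ (inv_pos.2 hb) ?_
      gcongr
    · exact absurd (lt_of_lt_of_le ha hab) hb
    · exact hnn _ (inv_pos.2 hb)
    · exact le_rfl
  have Frc : ∀ t : ℝ, ContinuousWithinAt F (Ici t) t := by
    intro t
    rcases lt_trichotomy t 0 with ht | rfl | ht
    · have h0 : ∀ᶠ s in 𝓝[Ici t] t, F s = 0 := by
        filter_upwards [nhdsWithin_le_nhds (Iio_mem_nhds ht)] with s hs
        have hs' : s < 0 := hs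
        simp only [hF]
        rw [if_neg (not_lt.2 (le_of_lt hs'))]
      have hFt : F t = 0 := by simp [hF, not_lt.2 (le_of_lt ht)]
      exact ContinuousWithinAt.congr_of_eventuallyEq continuousWithinAt_const h0 hFt
    · rw [← continuousWithinAt_Ioi_iff_Ici]
      have key : Tendsto (fun s : ℝ => f s⁻¹) (𝓝[>] (0:ℝ)) (𝓝 0) :=
        ftop.comp tendsto_inv_nhdsGT_zero
      have heq : F =ᶠ[𝓝[>] (0:ℝ)] fun s => f s⁻¹ := by
        filter_upwards [self_mem_nhdsWithin] with s hs
        have hs' : (0:ℝ) < s := hs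
        simp only [hF]
        rw [if_pos hs']
      have hF0 : F 0 = 0 := by simp [hF]
      unfold ContinuousWithinAt
      rw [hF0]
      exact key.congr' heq.symm
    · rw [← continuousWithinAt_Ioi_iff_Ici]
      have hinv : Tendsto (fun s : ℝ => s⁻¹) (𝓝[>] t) (𝓝[<] t⁻¹) := by
        rw [tendsto_nhdsWithin_iff]
        constructor
        · exact ((continuousAt_inv₀ (ne_of_gt ht)).tendsto).comp nhdsWithin_le_nhds
        · filter_upwards [self_mem_nhdsWithin] with s hs
          exact inv_strictAnti₀ ht hs
      have key : Tendsto (fun s : ℝ => f s⁻¹) (𝓝[>] t) (𝓝 (f t⁻¹)) :=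
        (hlc _ (inv_pos.2 ht)).comp hinv
      have heq : F =ᶠ[𝓝[>] t] fun s => f s⁻¹ := by
        filter_upwards [self_mem_nhdsWithin] with s hs
        have hs' : (0:ℝ) < s := lt_trans ht hs
        simp only [hF]
        rw [if_pos hs']
      have hFt : F t = f t⁻¹ := by simp only [hF]; rw [if_pos ht]
      unfold ContinuousWithinAt
      rw [hFt]
      exact key.congr' heq.symm
  set H : StieltjesFunction ℝ := ⟨F, Fmono, Frc⟩ with hH
  have hHcoe : ∀ t, H t = F t := fun t => rfl
  set ρ : Measure ℝ := Measure.map (fun t : ℝ => t⁻¹) (H.measure.restrict (Ioi 0)) with hρ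
  have hρ_Ici : ∀ x : ℝ, 0 < x → ρ (Ici x) = ENNReal.ofReal (f x) := by
    intro x hx
    rw [hρ, Measure.map_apply measurable_inv measurableSet_Ici,
      Measure.restrict_apply (measurable_inv measurableSet_Ici)]
    have hset : (fun t : ℝ => t⁻¹) ⁻¹' Ici x ∩ Ioi 0 = Ioc 0 x⁻¹ := by
      ext t
      simp only [mem_inter_iff, mem_preimage, mem_Ici, mem_Ioi, mem_Ioc]
      constructor
      · rintro ⟨h1, h2⟩
        refine ⟨h2, ?_⟩
        have := inv_anti₀ hx h1
        rwa [inv_inv] at this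
      · rintro ⟨h1, h2⟩
        refine ⟨?_, h1⟩
        have := inv_anti₀ h1 h2
        rwa [inv_inv] at this
    rw [hset, H.measure_Ioc, hHcoe, hHcoe, hF]
    simp only [inv_pos.2 hx, if_pos, inv_inv, lt_irrefl, if_neg, sub_zero]
    norm_num
  have hρ_Iic : ρ (Iic 0) = 0 := by
    rw [hρ, Measure.map_apply measurable_inv measurableSet_Iic,
      Measure.restrict_apply (measurable_inv measurableSet_Iic)]
    have : (fun t : ℝ => t⁻¹) ⁻¹' Iic 0 ∩ Ioi 0 = ∅ := by
      ext t
      simp only [mem_inter_iff, mem_preimage, mem_Iic, mem_Ioi, mem_empty_iff_false, iff_false]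
      rintro ⟨h1, h2⟩
      exact absurd (inv_pos.2 h2) (not_lt.2 h1)
    rw [this, measure_empty]
  set ν : Measure ℝ := ρ.withDensity (fun y => ENNReal.ofReal y) with hν
  have hν_Iic : ν (Iic 0) = 0 := by
    rw [hν, withDensity_apply _ measurableSet_Iic]
    rw [setLIntegral_measure_zero _ _ hρ_Iic]
  have hid_nn : 0 ≤ᵐ[ρ] fun y : ℝ => y := by
    rw [Filter.EventuallyLE, ae_iff]
    refine measure_mono_null (fun y hy => ?_) hρ_Iic
    simp only [mem_setOf_eq, Pi.zero_apply, not_le] at hy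
    exact le_of_lt hy
  have hf_nn_ae : 0 ≤ᵐ[volume.restrict (Ioi 0)] f :=
    (ae_restrict_iff' measurableSet_Ioi).2 (Eventually.of_forall fun x hx => hnn x hx)
  have hν_univ : ν univ = 1 := by
    rw [hν, withDensity_apply _ MeasurableSet.univ, Measure.restrict_univ]
    rw [lintegral_eq_lintegral_meas_le ρ hid_nn aemeasurable_id]
    have hcongr : ∀ t ∈ Ioi (0:ℝ), ρ {a : ℝ | t ≤ a} = ENNReal.ofReal (f t) :=
      fun t ht => hρ_Ici t ht
    rw [setLIntegral_congr_fun measurableSet_Ioi hcongr]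
    rw [← ofReal_integral_eq_lintegral_ofReal hInt hf_nn_ae, hint, ENNReal.ofReal_one]
  refine ⟨ν, ⟨hν_univ⟩, hν_Iic, fun x hx => ?_⟩
  have hIcc : ∀ y : ℝ, (1/y) * indicator (Icc 0 y) (fun _ => (1:ℝ)) x
      = indicator (Ici x) (fun y : ℝ => 1/y) y := by
    intro y
    by_cases h : x ≤ y <;>
      simp [Set.indicator_apply, mem_Icc, mem_Ici, le_of_lt hx, h]
  have step1 : ∫ y in Ioi (0:ℝ), (1/y) * indicator (Icc 0 y) (fun _ => (1:ℝ)) x ∂ν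
      = ∫ y in Ici x, (1/y) ∂ν := by
    simp only [hIcc]
    have hss : Ici x ∩ Ioi 0 = Ici x :=
      inter_eq_left.2 fun y (hy : y ∈ Ici x) => lt_of_lt_of_le hx hy
    rw [integral_indicator measurableSet_Ici, Measure.restrict_restrict measurableSet_Ici, hss]
  have hmeas_inv : Measurable fun y : ℝ => ENNReal.ofReal (1/y) :=
    ENNReal.measurable_ofReal.comp (measurable_const.div measurable_id)
  have hl : ∫⁻ y in Ici x, ENNReal.ofReal (1/y) ∂ν = ENNReal.ofReal (f x) := by
    rw [hν, restrict_withDensity measurableSet_Ici,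
      lintegral_withDensity_eq_lintegral_mul _ ENNReal.measurable_ofReal hmeas_inv]
    have hpt : ∀ y ∈ Ici x, ((fun y => ENNReal.ofReal y) * fun y => ENNReal.ofReal (1/y)) y
        = 1 := by
      intro y hy
      have hy0 : 0 < y := lt_of_lt_of_le hx hy
      simp only [Pi.mul_apply]
      rw [← ENNReal.ofReal_mul (le_of_lt hy0), mul_one_div, div_self (ne_of_gt hy0),
        ENNReal.ofReal_one]
    rw [setLIntegral_congr_fun measurableSet_Ici hpt]
    rw [lintegral_one, Measure.restrict_apply_univ, hρ_Ici x hx]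
  have hnonneg : 0 ≤ᵐ[ν.restrict (Ici x)] fun y : ℝ => 1/y := by
    refine (ae_restrict_iff' measurableSet_Ici).2 (Eventually.of_forall fun y hy => ?_)
    have hy0 : 0 < y := lt_of_lt_of_le hx hy
    positivity
  have haesm : AEStronglyMeasurable (fun y : ℝ => 1/y) (ν.restrict (Ici x)) :=
    (measurable_const.div measurable_id).aestronglyMeasurable
  rw [step1, integral_eq_lintegral_of_nonneg_ae hnonneg haesm, hl,
    ENNReal.toReal_ofReal (hnn x hx)]
end

section
/- The central chi-squared distribution with 3 degrees of freedom is not a mixture of noncentral chi-squared distributions with one degree of freedom: there is no probability measure ν on [0,∞) with χ²_3 = ∫ χ²_1(θ) ν(dθ). -/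
open MeasureTheory Set

/-- Density of the central chi-squared distribution with m degrees of freedom. -/
noncomputable def chiDensity (m : ℕ) (x : ℝ) : ℝ :=
  x ^ ((m : ℝ) / 2 - 1) * Real.exp (-x / 2) / (2 ^ ((m : ℝ) / 2) * Real.Gamma ((m : ℝ) / 2))

/-- The central chi-squared distribution with m degrees of freedom as a measure on ℝ. -/
noncomputable def chiSq (m : ℕ) : Measure ℝ :=
  (volume.restrict (Set.Ioi (0:ℝ))).withDensity (fun x => ENNReal.ofReal (chiDensity m x))

/-- The noncentral chi-squared distribution with 1 degree of freedom and
noncentrality parameter θ. -/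
noncomputable def ncChiSq1 (θ : ℝ) : Measure ℝ :=
  (volume.restrict (Set.Ioi (0:ℝ))).withDensity
    (fun x => ENNReal.ofReal
      (∑' k : ℕ, Real.exp (-θ / 2) * (θ / 2) ^ k / (Nat.factorial k) * chiDensity (2 * k + 1) x))

noncomputable def D1 : ℝ := 2 ^ ((1:ℝ)/2) * Real.Gamma (1/2)
noncomputable def D3 : ℝ := 2 ^ ((3:ℝ)/2) * Real.Gamma (3/2)

lemma D1_pos : 0 < D1 :=
  mul_pos (Real.rpow_pos_of_pos two_pos _) (Real.Gamma_pos_of_pos (by norm_num))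

lemma D3_pos : 0 < D3 :=
  mul_pos (Real.rpow_pos_of_pos two_pos _) (Real.Gamma_pos_of_pos (by norm_num))

lemma chiDensity_one (x : ℝ) :
    chiDensity 1 x = x ^ (-(1:ℝ)/2) * Real.exp (-x/2) / D1 := by
  unfold chiDensity D1
  norm_num

lemma chiDensity_three (x : ℝ) :
    chiDensity 3 x = x ^ ((1:ℝ)/2) * Real.exp (-x/2) / D3 := by
  unfold chiDensity D3
  norm_num

lemma gamma_lb (k : ℕ) : Real.sqrt Real.pi / 2 ^ k ≤ Real.Gamma ((k : ℝ) + 1 / 2) := by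
  induction k with
  | zero =>
      simp only [Nat.cast_zero, pow_zero, div_one, zero_add]
      rw [Real.Gamma_one_half_eq]
  | succ k ih =>
      have h : ((k + 1 : ℕ) : ℝ) + 1 / 2 = ((k : ℝ) + 1 / 2) + 1 := by push_cast; ring
      rw [h, Real.Gamma_add_one (by positivity)]
      calc Real.sqrt Real.pi / 2 ^ (k + 1)
          = (1/2) * (Real.sqrt Real.pi / 2 ^ k) := by ring
        _ ≤ ((k : ℝ) + 1/2) * Real.Gamma ((k : ℝ) + 1/2) := by
            refine mul_le_mul ?_ ih (by positivity) (by positivity)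
            have : (0:ℝ) ≤ (k:ℝ) := Nat.cast_nonneg k
            linarith

lemma chiDensity_nonneg {m : ℕ} (hm : 0 < m) {x : ℝ} (hx : 0 ≤ x) : 0 ≤ chiDensity m x := by
  unfold chiDensity
  have hg : 0 < Real.Gamma ((m:ℝ)/2) :=
    Real.Gamma_pos_of_pos (div_pos (by exact_mod_cast hm) two_pos)
  exact div_nonneg (mul_nonneg (Real.rpow_nonneg hx _) (Real.exp_nonneg _))
    (le_of_lt (mul_pos (Real.rpow_pos_of_pos two_pos _) hg))

lemma term_nonneg (θ : ℝ) (hθ : 0 ≤ θ) {x : ℝ} (hx : 0 < x) (k : ℕ) :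
    0 ≤ Real.exp (-θ / 2) * (θ / 2) ^ k / (Nat.factorial k) * chiDensity (2 * k + 1) x := by
  apply mul_nonneg
  · positivity
  · exact chiDensity_nonneg (by omega) hx.le

lemma chiDensity_odd_le (k : ℕ) {x : ℝ} (hx : 0 < x) :
    chiDensity (2*k+1) x ≤
      x ^ (k:ℝ) * x ^ (-(1:ℝ)/2) * Real.exp (-x/2) / (Real.sqrt 2 * Real.sqrt Real.pi) := by
  unfold chiDensity
  have hc : ((2*k+1 : ℕ) : ℝ) / 2 = (k:ℝ) + 1/2 := by push_cast; ring
  rw [hc]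
  have hnum : x ^ ((k:ℝ) + 1/2 - 1) = x ^ (k:ℝ) * x ^ (-(1:ℝ)/2) := by
    rw [← Real.rpow_add hx]; ring_nf
  have hden : Real.sqrt 2 * Real.sqrt Real.pi ≤ 2 ^ ((k:ℝ) + 1/2) * Real.Gamma ((k:ℝ) + 1/2) := by
    have h2 : (2:ℝ) ^ ((k:ℝ) + 1/2) = 2 ^ k * Real.sqrt 2 := by
      rw [Real.rpow_add two_pos, Real.rpow_natCast, Real.sqrt_eq_rpow]
    rw [h2]
    calc Real.sqrt 2 * Real.sqrt Real.pi
        = (2 ^ k * Real.sqrt 2) * (Real.sqrt Real.pi / 2 ^ k) := by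
          field_simp
      _ ≤ (2 ^ k * Real.sqrt 2) * Real.Gamma ((k:ℝ) + 1/2) := by
          apply mul_le_mul_of_nonneg_left (gamma_lb k) (by positivity)
  rw [hnum]
  exact div_le_div_of_nonneg_left (by positivity) (by positivity) hden

lemma summable_terms (θ : ℝ) (hθ : 0 ≤ θ) {x : ℝ} (hx : 0 < x) :
    Summable (fun k : ℕ =>
      Real.exp (-θ / 2) * (θ / 2) ^ k / (Nat.factorial k) * chiDensity (2 * k + 1) x) := by
  refine Summable.of_nonneg_of_le (term_nonneg θ hθ hx) (fun k => ?_)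
    ((Real.summable_pow_div_factorial (θ * x / 2)).mul_left
      (Real.exp (-θ/2) * (x ^ (-(1:ℝ)/2) * Real.exp (-x/2)) /
        (Real.sqrt 2 * Real.sqrt Real.pi)))
  calc Real.exp (-θ / 2) * (θ / 2) ^ k / (Nat.factorial k) * chiDensity (2 * k + 1) x
      ≤ Real.exp (-θ / 2) * (θ / 2) ^ k / (Nat.factorial k) *
          (x ^ (k:ℝ) * x ^ (-(1:ℝ)/2) * Real.exp (-x/2) /
            (Real.sqrt 2 * Real.sqrt Real.pi)) := by
        apply mul_le_mul_of_nonneg_left (chiDensity_odd_le k hx) (by positivity)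
    _ = (Real.exp (-θ/2) * (x ^ (-(1:ℝ)/2) * Real.exp (-x/2)) /
          (Real.sqrt 2 * Real.sqrt Real.pi)) * ((θ * x / 2) ^ k / (Nat.factorial k)) := by
        rw [Real.rpow_natCast]
        have h6 : (θ * x / 2) ^ k = (θ/2) ^ k * x ^ k := by
          rw [← mul_pow]; ring_nf
        rw [h6]; ring

lemma tsum_lb (θ : ℝ) (hθ : 0 ≤ θ) {x : ℝ} (hx : 0 < x) :
    Real.exp (-θ/2) * chiDensity 1 x ≤
      ∑' k : ℕ, Real.exp (-θ / 2) * (θ / 2) ^ k / (Nat.factorial k) * chiDensity (2 * k + 1) x := by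
  have h0 : Real.exp (-θ/2) * chiDensity 1 x =
      Real.exp (-θ / 2) * (θ / 2) ^ 0 / (Nat.factorial 0) * chiDensity (2 * 0 + 1) x := by
    norm_num
  rw [h0]
  exact Summable.le_tsum (summable_terms θ hθ hx) 0 (fun j _ => term_nonneg θ hθ hx j)

/-- χ²₃ is not a mixture of noncentral chi-squared distributions with one degree of
freedom. -/
theorem chiSq_three_not_mixture_of_noncentral_one :
    ¬ ∃ ν : Measure ℝ, IsProbabilityMeasure ν ∧ ν {θ : ℝ | θ < 0} = 0 ∧
      ∀ A : Set ℝ, MeasurableSet A →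
        chiSq 3 A = ∫⁻ θ, ncChiSq1 θ A ∂ν := by
  rintro ⟨ν, hν, hνneg, hA⟩
  -- ν is concentrated on [0, ∞)
  have hIci : ν (Ici (0:ℝ)) = 1 := by
    have h1 : ν (Iio (0:ℝ)) = 0 := hνneg
    have h2 := measure_compl (measurableSet_Iio (a := (0:ℝ))) (measure_ne_top ν _)
    rw [compl_Iio] at h2
    rw [h2, h1, measure_univ]
    simp
  -- find a bounded interval with positive mass
  obtain ⟨n, hn⟩ : ∃ n : ℕ, 0 < ν (Icc 0 (n:ℝ)) := by
    by_contra h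
    push_neg at h
    have hz : ∀ n : ℕ, ν (Icc 0 (n:ℝ)) = 0 := fun n => le_antisymm (h n) zero_le
    have hle : ν (Ici (0:ℝ)) ≤ ∑' n : ℕ, ν (Icc 0 (n:ℝ)) := by
      refine le_trans (measure_mono ?_) (measure_iUnion_le _)
      intro θ hθ
      obtain ⟨m, hm⟩ := exists_nat_ge θ
      exact mem_iUnion.mpr ⟨m, ⟨hθ, hm⟩⟩
    rw [hIci] at hle
    simp [hz] at hle
  set K : ℝ := Real.exp (-(n:ℝ)/2) * Real.exp (-(1:ℝ)/2) / (2 * D1) with hK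
  have hKpos : 0 < K :=
    div_pos (mul_pos (Real.exp_pos _) (Real.exp_pos _)) (by linarith [D1_pos])
  -- the key estimate
  have key : ∀ ε : ℝ, 0 < ε → ε ≤ 1 →
      ENNReal.ofReal K * ν (Icc 0 (n:ℝ)) ≤ ENNReal.ofReal (ε / D3) := by
    intro ε hε hε1
    have heq := hA (Ioo 0 ε) measurableSet_Ioo
    -- upper bound on chiSq 3 (Ioo 0 ε)
    have hL : chiSq 3 (Ioo 0 ε) ≤ ENNReal.ofReal (ε ^ ((1:ℝ)/2) * (ε / D3)) := by
      have e1 : chiSq 3 (Ioo 0 ε)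
          = ∫⁻ x in Ioo 0 ε, ENNReal.ofReal (chiDensity 3 x) ∂volume := by
        rw [chiSq, withDensity_apply _ measurableSet_Ioo,
          Measure.restrict_restrict measurableSet_Ioo, inter_eq_left.mpr Ioo_subset_Ioi_self]
      rw [e1]
      calc ∫⁻ x in Ioo 0 ε, ENNReal.ofReal (chiDensity 3 x) ∂volume
          ≤ ∫⁻ _x in Ioo 0 ε, ENNReal.ofReal (ε ^ ((1:ℝ)/2) / D3) ∂volume := by
            apply lintegral_mono_ae
            refine ae_restrict_of_forall_mem measurableSet_Ioo (fun x hx => ?_)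
            apply ENNReal.ofReal_le_ofReal
            rw [chiDensity_three]
            have h1 : x ^ ((1:ℝ)/2) ≤ ε ^ ((1:ℝ)/2) :=
              Real.rpow_le_rpow hx.1.le hx.2.le (by norm_num)
            have h2 : Real.exp (-x/2) ≤ 1 := by
              rw [Real.exp_le_one_iff]
              linarith [hx.1]
            calc x ^ ((1:ℝ)/2) * Real.exp (-x/2) / D3
                ≤ ε ^ ((1:ℝ)/2) * 1 / D3 :=
                  div_le_div_of_nonneg_right
                    (mul_le_mul h1 h2 (Real.exp_nonneg _) (Real.rpow_nonneg hε.le _)) D3_pos.le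
              _ = ε ^ ((1:ℝ)/2) / D3 := by ring
        _ = ENNReal.ofReal (ε ^ ((1:ℝ)/2) / D3) * volume (Ioo 0 ε) := setLIntegral_const _ _
        _ = ENNReal.ofReal (ε ^ ((1:ℝ)/2) * (ε / D3)) := by
            rw [Real.volume_Ioo,
              ← ENNReal.ofReal_mul (div_nonneg (Real.rpow_nonneg hε.le _) D3_pos.le)]
            ring_nf
    -- lower bound on each ncChiSq1 θ (Ioo 0 ε) for θ ∈ [0, n]
    have hstep : ∀ θ ∈ Icc (0:ℝ) (n:ℝ),
        ENNReal.ofReal (ε ^ ((1:ℝ)/2) * K) ≤ ncChiSq1 θ (Ioo 0 ε) := by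
      intro θ hθ
      have e2 : ncChiSq1 θ (Ioo 0 ε) = ∫⁻ x in Ioo 0 ε, ENNReal.ofReal
          (∑' k : ℕ, Real.exp (-θ / 2) * (θ / 2) ^ k / (Nat.factorial k)
            * chiDensity (2 * k + 1) x) ∂volume := by
        rw [ncChiSq1, withDensity_apply _ measurableSet_Ioo,
          Measure.restrict_restrict measurableSet_Ioo, inter_eq_left.mpr Ioo_subset_Ioi_self]
      rw [e2]
      have hsub : Ioo (ε/2) ε ⊆ Ioo 0 ε := Ioo_subset_Ioo_left (by positivity)
      refine le_trans ?_ (lintegral_mono_set hsub)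
      have hpt : ∀ x ∈ Ioo (ε/2) ε,
          ENNReal.ofReal (Real.exp (-(n:ℝ)/2) * Real.exp (-(1:ℝ)/2) * ε ^ (-(1:ℝ)/2) / D1)
            ≤ ENNReal.ofReal (∑' k : ℕ, Real.exp (-θ / 2) * (θ / 2) ^ k / (Nat.factorial k)
              * chiDensity (2 * k + 1) x) := by
        intro x hx
        have hx0 : 0 < x := lt_trans (by positivity) hx.1
        apply ENNReal.ofReal_le_ofReal
        refine le_trans ?_ (tsum_lb θ hθ.1 hx0)
        rw [chiDensity_one]
        have ha : Real.exp (-(n:ℝ)/2) ≤ Real.exp (-θ/2) := by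
          apply Real.exp_le_exp.mpr
          linarith [hθ.2]
        have hb : ε ^ (-(1:ℝ)/2) ≤ x ^ (-(1:ℝ)/2) := by
          have := Real.rpow_le_rpow_of_nonpos hx0 hx.2.le (by norm_num : -(1:ℝ)/2 ≤ 0)
          exact this
        have hc : Real.exp (-(1:ℝ)/2) ≤ Real.exp (-x/2) := by
          apply Real.exp_le_exp.mpr
          linarith [hx.2, hε1]
        rw [← mul_div_assoc]
        refine div_le_div_of_nonneg_right ?_ D1_pos.le
        calc Real.exp (-(n:ℝ)/2) * Real.exp (-(1:ℝ)/2) * ε ^ (-(1:ℝ)/2)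
            = Real.exp (-(n:ℝ)/2) * (ε ^ (-(1:ℝ)/2) * Real.exp (-(1:ℝ)/2)) := by ring
          _ ≤ Real.exp (-θ/2) * (x ^ (-(1:ℝ)/2) * Real.exp (-x/2)) := by
              apply mul_le_mul ha _ (by positivity) (Real.exp_nonneg _)
              exact mul_le_mul hb hc (Real.exp_nonneg _) (Real.rpow_nonneg hx0.le _)
      calc ENNReal.ofReal (ε ^ ((1:ℝ)/2) * K)
          = ENNReal.ofReal (Real.exp (-(n:ℝ)/2) * Real.exp (-(1:ℝ)/2) * ε ^ (-(1:ℝ)/2) / D1)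
              * volume (Ioo (ε/2) ε) := by
            rw [Real.volume_Ioo, ← ENNReal.ofReal_mul (div_nonneg (by positivity) D1_pos.le)]
            congr 1
            have hr : ε ^ (-(1:ℝ)/2) * ε = ε ^ ((1:ℝ)/2) := by
              nth_rewrite 2 [← Real.rpow_one ε]
              rw [← Real.rpow_add hε]
              norm_num
            have h7 : Real.exp (-(n:ℝ)/2) * Real.exp (-(1:ℝ)/2) * ε ^ (-(1:ℝ)/2) / D1
                * (ε - ε/2)
                = Real.exp (-(n:ℝ)/2) * Real.exp (-(1:ℝ)/2) / (2*D1)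
                  * (ε ^ (-(1:ℝ)/2) * ε) := by ring
            rw [h7, hr, hK]
            ring
        _ = ∫⁻ _x in Ioo (ε/2) ε, ENNReal.ofReal
              (Real.exp (-(n:ℝ)/2) * Real.exp (-(1:ℝ)/2) * ε ^ (-(1:ℝ)/2) / D1) ∂volume :=
            (setLIntegral_const _ _).symm
        _ ≤ ∫⁻ x in Ioo (ε/2) ε, ENNReal.ofReal
              (∑' k : ℕ, Real.exp (-θ / 2) * (θ / 2) ^ k / (Nat.factorial k)
                * chiDensity (2 * k + 1) x) ∂volume :=
            lintegral_mono_ae (ae_restrict_of_forall_mem measurableSet_Ioo hpt)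
    -- lower bound on the mixture
    have hR : ENNReal.ofReal (ε ^ ((1:ℝ)/2)) * (ENNReal.ofReal K * ν (Icc 0 (n:ℝ)))
        ≤ ∫⁻ θ, ncChiSq1 θ (Ioo 0 ε) ∂ν := by
      calc ENNReal.ofReal (ε ^ ((1:ℝ)/2)) * (ENNReal.ofReal K * ν (Icc 0 (n:ℝ)))
          = ENNReal.ofReal (ε ^ ((1:ℝ)/2) * K) * ν (Icc 0 (n:ℝ)) := by
            rw [ENNReal.ofReal_mul (by positivity), mul_assoc]
        _ = ∫⁻ _θ in Icc 0 (n:ℝ), ENNReal.ofReal (ε ^ ((1:ℝ)/2) * K) ∂ν :=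
            (setLIntegral_const _ _).symm
        _ ≤ ∫⁻ θ in Icc 0 (n:ℝ), ncChiSq1 θ (Ioo 0 ε) ∂ν :=
            lintegral_mono_ae (ae_restrict_of_forall_mem measurableSet_Icc hstep)
        _ ≤ ∫⁻ θ, ncChiSq1 θ (Ioo 0 ε) ∂ν := setLIntegral_le_lintegral _ _
    have hcomb : ENNReal.ofReal (ε ^ ((1:ℝ)/2)) * (ENNReal.ofReal K * ν (Icc 0 (n:ℝ)))
        ≤ ENNReal.ofReal (ε ^ ((1:ℝ)/2)) * ENNReal.ofReal (ε / D3) := by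
      refine le_trans hR ?_
      rw [← heq]
      refine le_trans hL ?_
      rw [← ENNReal.ofReal_mul (by positivity)]
    exact (ENNReal.mul_le_mul_iff_right
      ((ENNReal.ofReal_pos.mpr (by positivity)).ne') ENNReal.ofReal_ne_top).mp hcomb
  -- derive the contradiction
  set L : ENNReal := ENNReal.ofReal K * ν (Icc 0 (n:ℝ)) with hL
  have hLne : L ≠ 0 := by
    apply mul_ne_zero
    · exact (ENNReal.ofReal_pos.mpr hKpos).ne'
    · exact hn.ne'
  have hLtop : L ≠ ⊤ := ENNReal.mul_ne_top ENNReal.ofReal_ne_top (measure_ne_top ν _)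
  have hLpos : 0 < L.toReal := ENNReal.toReal_pos hLne hLtop
  set ε : ℝ := min 1 (D3 * L.toReal / 2) with hε
  have hεpos : 0 < ε := lt_min one_pos (div_pos (mul_pos D3_pos hLpos) two_pos)
  have hε1 : ε ≤ 1 := min_le_left _ _
  have hineq := key ε hεpos hε1
  have hlt : ENNReal.ofReal (ε / D3) < L := by
    have h1 : ε / D3 ≤ L.toReal / 2 := by
      rw [div_le_iff₀ D3_pos]
      calc ε ≤ D3 * L.toReal / 2 := min_le_right _ _
        _ = L.toReal / 2 * D3 := by ring
    have h2 : ε / D3 < L.toReal := lt_of_le_of_lt h1 (by linarith)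
    calc ENNReal.ofReal (ε / D3) < ENNReal.ofReal L.toReal :=
        (ENNReal.ofReal_lt_ofReal_iff hLpos).mpr h2
      _ = L := ENNReal.ofReal_toReal hLtop
  exact absurd hineq (not_le.mpr hlt)
end

section
/- If k, l ∈ ℕ have different parities, then no probability measure is simultaneously a mixture of noncentral chi-squared distributions with k degrees of freedom and a mixture of noncentral chi-squared distributions with l degrees of freedom: Mix{χ²_k(θ) : θ ≥ 0} ∩ Mix{χ²_l(θ) : θ ≥ 0} = ∅. -/
open MeasureTheory Set

/-- The noncentral chi-squared distribution with k degrees of freedom and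
noncentrality parameter θ. -/
noncomputable def ncChiSq (k : ℕ) (θ : ℝ) : Measure ℝ :=
  (volume.restrict (Set.Ioi (0:ℝ))).withDensity
    (fun x => ENNReal.ofReal
      (∑' n : ℕ, Real.exp (-θ / 2) * (θ / 2) ^ n / (Nat.factorial n) * chiDensity (k + 2 * n) x))

/-- μ belongs to Mix{χ²_k(θ) : θ ≥ 0}. -/
def InMixNcChiSq (k : ℕ) (μ : Measure ℝ) : Prop :=
  ∃ ν : Measure ℝ, IsProbabilityMeasure ν ∧ ν {θ : ℝ | θ < 0} = 0 ∧
    ∀ A : Set ℝ, MeasurableSet A → μ A = ∫⁻ θ, ncChiSq k θ A ∂ν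

lemma gamma_fact_le (a : ℝ) (ha : 0 < a) (n : ℕ) :
    Real.Gamma (a + 1) * n.factorial ≤ Real.Gamma (a + n + 1) := by
  induction n with
  | zero => simp
  | succ m ih =>
    have hpos : (0:ℝ) < a + m + 1 := by positivity
    have heq : Real.Gamma (a + (m + 1 : ℕ) + 1) = (a + m + 1) * Real.Gamma (a + m + 1) := by
      have h := Real.Gamma_add_one (s := a + m + 1) hpos.ne'
      have h2 : a + ((m : ℝ) + 1) + 1 = a + (m : ℝ) + 1 + 1 := by ring
      push_cast
      rw [h2, h]
    rw [heq]
    have hfac : (0:ℝ) ≤ Real.Gamma (a + 1) * m.factorial := by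
      have := Real.Gamma_pos_of_pos (show (0:ℝ) < a + 1 by linarith)
      positivity
    calc Real.Gamma (a + 1) * ((m + 1 : ℕ).factorial : ℝ)
        = ((m : ℝ) + 1) * (Real.Gamma (a + 1) * m.factorial) := by
          rw [Nat.factorial_succ]; push_cast; ring
      _ ≤ (a + m + 1) * (Real.Gamma (a + m + 1)) := by
          apply mul_le_mul (by linarith) ih hfac hpos.le

lemma gamma_inv_le (a : ℝ) (ha : 0 < a) (n : ℕ) :
    (Real.Gamma (a + n))⁻¹ ≤ max (Real.Gamma a)⁻¹ (Real.Gamma (a + 1))⁻¹ := by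
  cases n with
  | zero => simpa using le_max_left _ _
  | succ m =>
    refine le_trans ?_ (le_max_right _ _)
    have hg1 : 0 < Real.Gamma (a + 1) := Real.Gamma_pos_of_pos (by linarith)
    have hfac : (1:ℝ) ≤ m.factorial := by exact_mod_cast m.factorial_pos
    have hle : Real.Gamma (a + 1) ≤ Real.Gamma (a + (m + 1 : ℕ)) := by
      have h := gamma_fact_le a ha m
      have h3 : a + ((m : ℕ) : ℝ) + 1 = a + ((m + 1 : ℕ) : ℝ) := by push_cast; ring
      rw [h3] at h
      nlinarith
    exact inv_anti₀ hg1 hle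

noncomputable def mixM (k : ℕ) : ℝ :=
  max (Real.Gamma ((k : ℝ) / 2))⁻¹ (Real.Gamma ((k : ℝ) / 2 + 1))⁻¹

noncomputable def upC (k : ℕ) : ℝ := mixM k / 2 ^ ((k : ℝ) / 2)

noncomputable def loC (k : ℕ) : ℝ :=
  Real.exp (-2⁻¹) / (2 ^ ((k : ℝ) / 2) * Real.Gamma ((k : ℝ) / 2))

lemma mixM_pos (k : ℕ) (hk : 1 ≤ k) : 0 < mixM k := by
  have hp : (0:ℝ) < (k : ℝ) / 2 := by positivity
  have := Real.Gamma_pos_of_pos hp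
  exact lt_max_of_lt_left (by positivity)

lemma upC_pos (k : ℕ) (hk : 1 ≤ k) : 0 < upC k := by
  have := mixM_pos k hk
  unfold upC
  have : (0:ℝ) < (2:ℝ) ^ ((k : ℝ) / 2) := Real.rpow_pos_of_pos two_pos _
  positivity

lemma loC_pos (k : ℕ) (hk : 1 ≤ k) : 0 < loC k := by
  have hp : (0:ℝ) < (k : ℝ) / 2 := by positivity
  have h1 := Real.Gamma_pos_of_pos hp
  have h2 : (0:ℝ) < (2:ℝ) ^ ((k : ℝ) / 2) := Real.rpow_pos_of_pos two_pos _
  unfold loC; positivity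

lemma chiDensity_eq (k n : ℕ) (hk : 1 ≤ k) (x : ℝ) (hx : 0 < x) :
    chiDensity (k + 2 * n) x =
      (x ^ ((k : ℝ) / 2 - 1) / 2 ^ ((k : ℝ) / 2)) * (x / 2) ^ n * Real.exp (-x / 2) *
        (Real.Gamma ((k : ℝ) / 2 + n))⁻¹ := by
  unfold chiDensity
  have hc : ((k + 2 * n : ℕ) : ℝ) / 2 = (k : ℝ) / 2 + n := by push_cast; ring
  rw [hc]
  have h1 : x ^ ((k : ℝ) / 2 + (n : ℝ) - 1) = x ^ ((k : ℝ) / 2 - 1) * x ^ n := by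
    have he : (k : ℝ) / 2 + (n : ℝ) - 1 = ((k : ℝ) / 2 - 1) + (n : ℝ) := by ring
    rw [he, Real.rpow_add hx, Real.rpow_natCast]
  have h2 : (2 : ℝ) ^ ((k : ℝ) / 2 + (n : ℝ)) = 2 ^ ((k : ℝ) / 2) * 2 ^ n := by
    rw [Real.rpow_add two_pos, Real.rpow_natCast]
  rw [h1, h2]
  have h3 : (0:ℝ) < (2:ℝ) ^ ((k : ℝ) / 2) := Real.rpow_pos_of_pos two_pos _
  have h4 : Real.Gamma ((k : ℝ) / 2 + n) ≠ 0 := by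
    have h5 : (1:ℝ) ≤ (k : ℝ) := by exact_mod_cast hk
    have : (0:ℝ) < (k : ℝ) / 2 + n := by positivity
    exact (Real.Gamma_pos_of_pos this).ne'
  field_simp
  rw [← mul_pow]; congr 1; ring

lemma tsum_bounds (k : ℕ) (hk : 1 ≤ k) (θ x : ℝ) (hθ : 0 ≤ θ) (hx : 0 < x) (hx1 : x ≤ 1) :
    Summable (fun n : ℕ => Real.exp (-θ / 2) * (θ / 2) ^ n / (Nat.factorial n) *
      chiDensity (k + 2 * n) x) ∧
    (∑' n : ℕ, Real.exp (-θ / 2) * (θ / 2) ^ n / (Nat.factorial n) * chiDensity (k + 2 * n) x)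
      ≤ upC k * x ^ ((k : ℝ) / 2 - 1) ∧
    Real.exp (-θ / 2) * (loC k * x ^ ((k : ℝ) / 2 - 1)) ≤
      (∑' n : ℕ, Real.exp (-θ / 2) * (θ / 2) ^ n / (Nat.factorial n) *
        chiDensity (k + 2 * n) x) := by
  have hk1 : (1:ℝ) ≤ (k : ℝ) := by exact_mod_cast hk
  set p := (k : ℝ) / 2 with hpdef
  have hppos : 0 < p := by positivity
  have hΓp : 0 < Real.Gamma p := Real.Gamma_pos_of_pos hppos
  have h2p : 0 < (2:ℝ) ^ p := Real.rpow_pos_of_pos two_pos _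
  have hxp : 0 < x ^ (p - 1) := Real.rpow_pos_of_pos hx _
  set f := fun n : ℕ => Real.exp (-θ / 2) * (θ / 2) ^ n / (Nat.factorial n) *
      chiDensity (k + 2 * n) x with hfdef
  have hΓn : ∀ n : ℕ, 0 < Real.Gamma (p + n) := fun n =>
    Real.Gamma_pos_of_pos (by positivity)
  have hnn : ∀ n, 0 ≤ f n := by
    intro n
    have hcd : 0 ≤ chiDensity (k + 2 * n) x := by
      rw [chiDensity_eq k n hk x hx]
      have := hΓn n
      positivity
    have h1 : (0:ℝ) ≤ (θ / 2) ^ n := pow_nonneg (by linarith) n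
    have h2 : (0:ℝ) ≤ Real.exp (-θ / 2) := Real.exp_nonneg _
    have h3 : (0:ℝ) ≤ (Nat.factorial n : ℝ) := Nat.cast_nonneg _
    apply mul_nonneg (div_nonneg (mul_nonneg h2 h1) h3) hcd
  have hcdle : ∀ n : ℕ, chiDensity (k + 2 * n) x ≤ x ^ (p - 1) * (mixM k / 2 ^ p) := by
    intro n
    rw [chiDensity_eq k n hk x hx]
    have hΓ := hΓn n
    have h1 : (x / 2) ^ n ≤ 1 := pow_le_one₀ (by positivity) (by linarith)
    have h2 : Real.exp (-x / 2) ≤ 1 := Real.exp_le_one_iff.mpr (by linarith)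
    have h3 : (Real.Gamma (p + n))⁻¹ ≤ mixM k := gamma_inv_le p hppos n
    calc (x ^ (p - 1) / 2 ^ p) * (x / 2) ^ n * Real.exp (-x / 2) * (Real.Gamma (p + n))⁻¹
        ≤ (x ^ (p - 1) / 2 ^ p) * 1 * 1 * mixM k := by
          gcongr <;> positivity
      _ = x ^ (p - 1) * (mixM k / 2 ^ p) := by ring
  have hfb : ∀ n : ℕ, f n ≤ (x ^ (p - 1) * (mixM k / 2 ^ p) * Real.exp (-θ / 2)) *
      ((θ / 2) ^ n / (Nat.factorial n)) := by
    intro n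
    have hpos : (0:ℝ) ≤ Real.exp (-θ / 2) * (θ / 2) ^ n / (Nat.factorial n) := by
      have h1 : (0:ℝ) ≤ (θ / 2) ^ n := pow_nonneg (by linarith) n
      have h2 : (0:ℝ) ≤ Real.exp (-θ / 2) := Real.exp_nonneg _
      positivity
    calc f n ≤ (Real.exp (-θ / 2) * (θ / 2) ^ n / (Nat.factorial n)) *
          (x ^ (p - 1) * (mixM k / 2 ^ p)) := mul_le_mul_of_nonneg_left (hcdle n) hpos
      _ = _ := by ring
  have hsumb : Summable (fun n : ℕ => (x ^ (p - 1) * (mixM k / 2 ^ p) * Real.exp (-θ / 2)) *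
      ((θ / 2) ^ n / (Nat.factorial n))) :=
    (Real.summable_pow_div_factorial (θ / 2)).mul_left _
  have hsf : Summable f := Summable.of_nonneg_of_le hnn hfb hsumb
  have hMk := mixM_pos k hk
  refine ⟨hsf, ?_, ?_⟩
  · have h1 : ∑' n, f n ≤ ∑' n : ℕ, (x ^ (p - 1) * (mixM k / 2 ^ p) * Real.exp (-θ / 2)) *
        ((θ / 2) ^ n / (Nat.factorial n)) := Summable.tsum_le_tsum hfb hsf hsumb
    rw [tsum_mul_left] at h1
    have h2 : ∑' n : ℕ, (θ / 2) ^ n / (Nat.factorial n : ℝ) ≤ Real.exp (θ / 2) :=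
      Real.tsum_le_of_sum_range_le
        (fun n => by positivity)
        (fun n => Real.sum_le_exp_of_nonneg (by linarith) n)
    have hC : (0:ℝ) ≤ x ^ (p - 1) * (mixM k / 2 ^ p) * Real.exp (-θ / 2) := by positivity
    have h3 : ∑' n, f n ≤ (x ^ (p - 1) * (mixM k / 2 ^ p) * Real.exp (-θ / 2)) *
        Real.exp (θ / 2) := le_trans h1 (mul_le_mul_of_nonneg_left h2 hC)
    have he : Real.exp (-θ / 2) * Real.exp (θ / 2) = 1 := by
      rw [← Real.exp_add]; ring_nf; exact Real.exp_zero
    have h4 : (x ^ (p - 1) * (mixM k / 2 ^ p) * Real.exp (-θ / 2)) * Real.exp (θ / 2)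
        = upC k * x ^ (p - 1) := by
      unfold upC
      linear_combination (x ^ (p - 1) * (mixM k / 2 ^ p)) * he
    rw [h4] at h3
    exact h3
  · have hcd0 : loC k * x ^ (p - 1) ≤ chiDensity (k + 2 * 0) x := by
      rw [chiDensity_eq k 0 hk x hx]
      simp only [pow_zero, Nat.cast_zero, add_zero, mul_one]
      have hxe : Real.exp (-2⁻¹) ≤ Real.exp (-x / 2) := Real.exp_le_exp.mpr (by linarith)
      calc loC k * x ^ (p - 1)
          = (x ^ (p - 1) / 2 ^ p * (Real.Gamma p)⁻¹) * Real.exp (-2⁻¹) := by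
            unfold loC; field_simp; ring
        _ ≤ (x ^ (p - 1) / 2 ^ p * (Real.Gamma p)⁻¹) * Real.exp (-x / 2) := by
            gcongr <;> positivity
        _ = x ^ (p - 1) / 2 ^ p * Real.exp (-x / 2) * (Real.Gamma p)⁻¹ := by ring
    have hf0 : f 0 = Real.exp (-θ / 2) * chiDensity (k + 2 * 0) x := by
      simp [hfdef]
    have h0 : Real.exp (-θ / 2) * (loC k * x ^ (p - 1)) ≤ f 0 := by
      rw [hf0]
      exact mul_le_mul_of_nonneg_left hcd0 (Real.exp_nonneg _)
    exact le_trans h0 (Summable.le_tsum hsf 0 fun n _ => hnn n)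

lemma meas_rpow (p : ℝ) : Measurable fun x : ℝ => ENNReal.ofReal (x ^ (p - 1)) := by
  fun_prop

lemma lintegral_rpow_Ioc (p ε : ℝ) (hp : 0 < p) (hε : 0 < ε) :
    ∫⁻ x in Ioc (0:ℝ) ε, ENNReal.ofReal (x ^ (p - 1)) = ENNReal.ofReal (ε ^ p / p) := by
  have hint : IntegrableOn (fun x : ℝ => x ^ (p - 1)) (Ioc 0 ε) := by
    have h := intervalIntegral.intervalIntegrable_rpow' (a := 0) (b := ε) (r := p - 1)
      (by linarith)
    rwa [intervalIntegrable_iff_integrableOn_Ioc_of_le hε.le] at h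
  have hae : 0 ≤ᵐ[volume.restrict (Ioc (0:ℝ) ε)] fun x : ℝ => x ^ (p - 1) := by
    filter_upwards [ae_restrict_mem measurableSet_Ioc] with x hx
    exact Real.rpow_nonneg hx.1.le _
  rw [← ofReal_integral_eq_lintegral_ofReal hint hae]
  congr 1
  have h1 : ∫ x in Ioc (0:ℝ) ε, x ^ (p - 1) = ∫ x in (0:ℝ)..ε, x ^ (p - 1) :=
    (intervalIntegral.integral_of_le hε.le).symm
  rw [h1, integral_rpow (Or.inl (by linarith))]
  have e1 : p - 1 + 1 = p := by ring
  rw [e1, Real.zero_rpow hp.ne']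
  ring

lemma ncChiSq_Ioc (k : ℕ) (θ ε : ℝ) :
    ncChiSq k θ (Ioc 0 ε) = ∫⁻ x in Ioc (0:ℝ) ε, ENNReal.ofReal
      (∑' n : ℕ, Real.exp (-θ / 2) * (θ / 2) ^ n / (Nat.factorial n) *
        chiDensity (k + 2 * n) x) := by
  rw [ncChiSq, withDensity_apply _ measurableSet_Ioc,
    Measure.restrict_restrict measurableSet_Ioc, inter_eq_left.mpr Ioc_subset_Ioi_self]

lemma ncChiSq_Ioc_le (k : ℕ) (hk : 1 ≤ k) (θ ε : ℝ) (hθ : 0 ≤ θ) (hε : 0 < ε) (hε1 : ε ≤ 1) :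
    ncChiSq k θ (Ioc 0 ε) ≤
      ENNReal.ofReal (upC k * (ε ^ ((k:ℝ)/2) / ((k:ℝ)/2))) := by
  have hk1 : (1:ℝ) ≤ (k : ℝ) := by exact_mod_cast hk
  have hp : (0:ℝ) < (k:ℝ)/2 := by positivity
  rw [ncChiSq_Ioc]
  have hupC := upC_pos k hk
  calc ∫⁻ x in Ioc (0:ℝ) ε, ENNReal.ofReal
        (∑' n : ℕ, Real.exp (-θ / 2) * (θ / 2) ^ n / (Nat.factorial n) *
          chiDensity (k + 2 * n) x)
      ≤ ∫⁻ x in Ioc (0:ℝ) ε,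
          ENNReal.ofReal (upC k) * ENNReal.ofReal (x ^ ((k:ℝ)/2 - 1)) := by
        apply lintegral_mono_ae
        rw [ae_restrict_iff' measurableSet_Ioc]
        refine ae_of_all _ fun x hx => ?_
        have hb := (tsum_bounds k hk θ x hθ hx.1 (le_trans hx.2 hε1)).2.1
        calc ENNReal.ofReal _ ≤ ENNReal.ofReal (upC k * x ^ ((k:ℝ)/2 - 1)) :=
              ENNReal.ofReal_le_ofReal hb
          _ = ENNReal.ofReal (upC k) * ENNReal.ofReal (x ^ ((k:ℝ)/2 - 1)) :=
              ENNReal.ofReal_mul hupC.le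
    _ = ENNReal.ofReal (upC k) * ENNReal.ofReal (ε ^ ((k:ℝ)/2) / ((k:ℝ)/2)) := by
        rw [lintegral_const_mul _ (meas_rpow _), lintegral_rpow_Ioc _ _ hp hε]
    _ = ENNReal.ofReal (upC k * (ε ^ ((k:ℝ)/2) / ((k:ℝ)/2))) :=
        (ENNReal.ofReal_mul hupC.le).symm

lemma le_ncChiSq_Ioc (k : ℕ) (hk : 1 ≤ k) (θ ε : ℝ) (hθ : 0 ≤ θ) (hε : 0 < ε) (hε1 : ε ≤ 1) :
    ENNReal.ofReal (Real.exp (-θ / 2)) *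
      ENNReal.ofReal (loC k * (ε ^ ((k:ℝ)/2) / ((k:ℝ)/2))) ≤ ncChiSq k θ (Ioc 0 ε) := by
  have hk1 : (1:ℝ) ≤ (k : ℝ) := by exact_mod_cast hk
  have hp : (0:ℝ) < (k:ℝ)/2 := by positivity
  have hloC := loC_pos k hk
  rw [ncChiSq_Ioc]
  calc ENNReal.ofReal (Real.exp (-θ / 2)) *
        ENNReal.ofReal (loC k * (ε ^ ((k:ℝ)/2) / ((k:ℝ)/2)))
      = ENNReal.ofReal (Real.exp (-θ / 2) * loC k) *
          ENNReal.ofReal (ε ^ ((k:ℝ)/2) / ((k:ℝ)/2)) := by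
        rw [ENNReal.ofReal_mul hloC.le, ENNReal.ofReal_mul (Real.exp_nonneg _)]
        ring
    _ = ∫⁻ x in Ioc (0:ℝ) ε,
          ENNReal.ofReal (Real.exp (-θ / 2) * loC k) * ENNReal.ofReal (x ^ ((k:ℝ)/2 - 1)) := by
        rw [lintegral_const_mul _ (meas_rpow _), lintegral_rpow_Ioc _ _ hp hε]
    _ ≤ ∫⁻ x in Ioc (0:ℝ) ε, ENNReal.ofReal
          (∑' n : ℕ, Real.exp (-θ / 2) * (θ / 2) ^ n / (Nat.factorial n) *
            chiDensity (k + 2 * n) x) := by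
        apply lintegral_mono_ae
        rw [ae_restrict_iff' measurableSet_Ioc]
        refine ae_of_all _ fun x hx => ?_
        have hb := (tsum_bounds k hk θ x hθ hx.1 (le_trans hx.2 hε1)).2.2
        calc ENNReal.ofReal (Real.exp (-θ / 2) * loC k) * ENNReal.ofReal (x ^ ((k:ℝ)/2 - 1))
            = ENNReal.ofReal (Real.exp (-θ / 2) * (loC k * x ^ ((k:ℝ)/2 - 1))) := by
              rw [← ENNReal.ofReal_mul (by positivity : (0:ℝ) ≤ Real.exp (-θ/2) * loC k)]
              ring_nf
          _ ≤ _ := ENNReal.ofReal_le_ofReal hb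

lemma mix_aux (k l : ℕ) (hk : 1 ≤ k) (hl : 1 ≤ l) (hkl : k < l) (μ : Measure ℝ)
    (h1 : InMixNcChiSq k μ) (h2 : InMixNcChiSq l μ) : False := by
  obtain ⟨ν, hν, hν0, hμk⟩ := h1
  obtain ⟨ν', hν', hν'0, hμl⟩ := h2
  have hk1 : (1:ℝ) ≤ (k : ℝ) := by exact_mod_cast hk
  have hl1 : (1:ℝ) ≤ (l : ℝ) := by exact_mod_cast hl
  set p := (k : ℝ) / 2 with hpdef
  set q := (l : ℝ) / 2 with hqdef
  have hp : 0 < p := by positivity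
  have hq : 0 < q := by positivity
  have hpq : p + 1/2 ≤ q := by
    have : (k : ℝ) + 1 ≤ (l : ℝ) := by exact_mod_cast hkl
    rw [hpdef, hqdef]; linarith
  have haeν : ∀ᵐ θ ∂ν, 0 ≤ θ := by
    rw [ae_iff]
    have : {θ : ℝ | ¬ 0 ≤ θ} = {θ : ℝ | θ < 0} := by ext θ; simp [not_le]
    rw [this]; exact hν0
  have haeν' : ∀ᵐ θ ∂ν', 0 ≤ θ := by
    rw [ae_iff]
    have : {θ : ℝ | ¬ 0 ≤ θ} = {θ : ℝ | θ < 0} := by ext θ; simp [not_le]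
    rw [this]; exact hν'0
  have hmeas : Measurable fun θ : ℝ => ENNReal.ofReal (Real.exp (-θ / 2)) := by fun_prop
  set J := ∫⁻ θ, ENNReal.ofReal (Real.exp (-θ / 2)) ∂ν with hJdef
  have hJpos : 0 < J := by
    rw [hJdef, lintegral_pos_iff_support hmeas]
    have hsupp : Function.support (fun θ : ℝ => ENNReal.ofReal (Real.exp (-θ / 2))) = univ := by
      ext θ
      simp only [Function.mem_support, mem_univ, iff_true, ne_eq, ENNReal.ofReal_eq_zero, not_le]
      exact Real.exp_pos _
    rw [hsupp]
    simp [hν.measure_univ]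
  have hJle : J ≤ 1 := by
    rw [hJdef]
    calc ∫⁻ θ, ENNReal.ofReal (Real.exp (-θ / 2)) ∂ν ≤ ∫⁻ _, 1 ∂ν := by
          apply lintegral_mono_ae
          filter_upwards [haeν] with θ hθ
          rw [← ENNReal.ofReal_one]
          exact ENNReal.ofReal_le_ofReal (Real.exp_le_one_iff.mpr (by linarith))
      _ = 1 := by simp [hν.measure_univ]
  have hJt : J ≠ ⊤ := (lt_of_le_of_lt hJle ENNReal.one_lt_top).ne
  set j := J.toReal with hjdef
  have hj : 0 < j := ENNReal.toReal_pos hJpos.ne' hJt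
  have hloC := loC_pos k hk
  have hupC := upC_pos l hl
  have key : ∀ ε : ℝ, 0 < ε → ε ≤ 1 →
      j * (loC k * (ε ^ p / p)) ≤ upC l * (ε ^ q / q) := by
    intro ε hε hε1
    have hL : ENNReal.ofReal (j * (loC k * (ε ^ p / p))) ≤ μ (Ioc 0 ε) := by
      have hae1 : ∀ᵐ θ ∂ν, ENNReal.ofReal (Real.exp (-θ / 2)) *
          ENNReal.ofReal (loC k * (ε ^ p / p)) ≤ ncChiSq k θ (Ioc 0 ε) := by
        filter_upwards [haeν] with θ hθ
        exact le_ncChiSq_Ioc k hk θ ε hθ hε hε1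
      calc ENNReal.ofReal (j * (loC k * (ε ^ p / p)))
          = ENNReal.ofReal j * ENNReal.ofReal (loC k * (ε ^ p / p)) :=
            ENNReal.ofReal_mul hj.le
        _ = J * ENNReal.ofReal (loC k * (ε ^ p / p)) := by
            rw [hjdef, ENNReal.ofReal_toReal hJt]
        _ = ∫⁻ θ, ENNReal.ofReal (Real.exp (-θ / 2)) *
              ENNReal.ofReal (loC k * (ε ^ p / p)) ∂ν := by
            rw [hJdef, lintegral_mul_const _ hmeas]
        _ ≤ ∫⁻ θ, ncChiSq k θ (Ioc 0 ε) ∂ν := lintegral_mono_ae hae1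
        _ = μ (Ioc 0 ε) := (hμk _ measurableSet_Ioc).symm
    have hU : μ (Ioc 0 ε) ≤ ENNReal.ofReal (upC l * (ε ^ q / q)) := by
      rw [hμl _ measurableSet_Ioc]
      calc ∫⁻ θ, ncChiSq l θ (Ioc 0 ε) ∂ν'
          ≤ ∫⁻ _, ENNReal.ofReal (upC l * (ε ^ q / q)) ∂ν' := by
            apply lintegral_mono_ae
            filter_upwards [haeν'] with θ hθ
            exact ncChiSq_Ioc_le l hl θ ε hθ hε hε1
        _ = ENNReal.ofReal (upC l * (ε ^ q / q)) := by
            simp [hν'.measure_univ]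
    have hcomb := le_trans hL hU
    have hq' : (0:ℝ) ≤ ε ^ q / q := by positivity
    exact (ENNReal.ofReal_le_ofReal_iff (mul_nonneg hupC.le hq')).mp hcomb
  set A := j * loC k / p with hAdef
  set B := upC l / q with hBdef
  have hA : 0 < A := by rw [hAdef]; positivity
  have hB : 0 < B := by rw [hBdef]; positivity
  set ε := min 1 ((A / (2 * B)) ^ 2) with hεdef
  have hε : 0 < ε := lt_min one_pos (by positivity)
  have hε1 : ε ≤ 1 := min_le_left _ _
  have hkey := key ε hε hε1
  have hεp : 0 < ε ^ p := Real.rpow_pos_of_pos hε _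
  have hsplit : ε ^ q = ε ^ p * ε ^ (q - p) := by
    rw [← Real.rpow_add hε]; ring_nf
  have h2 : A ≤ B * ε ^ (q - p) := by
    have hh : A * ε ^ p ≤ (B * ε ^ (q - p)) * ε ^ p := by
      have e1 : A * ε ^ p = j * (loC k * (ε ^ p / p)) := by rw [hAdef]; ring
      have e2 : (B * ε ^ (q - p)) * ε ^ p = upC l * (ε ^ q / q) := by
        rw [hBdef, hsplit]; ring
      rw [e1, e2]; exact hkey
    exact le_of_mul_le_mul_right hh hεp
  have h3 : ε ^ (q - p) ≤ ε ^ (1/2 : ℝ) :=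
    Real.rpow_le_rpow_of_exponent_ge hε hε1 (by linarith)
  have h4 : ε ^ (1/2 : ℝ) ≤ A / (2 * B) := by
    have h5 : ε ≤ (A / (2 * B)) ^ 2 := min_le_right _ _
    calc ε ^ (1/2 : ℝ) ≤ ((A / (2 * B)) ^ 2) ^ (1/2 : ℝ) :=
          Real.rpow_le_rpow hε.le h5 (by norm_num)
      _ = A / (2 * B) := by
          rw [← Real.rpow_natCast (A / (2 * B)) 2, ← Real.rpow_mul (by positivity)]
          norm_num
  have h6 : B * ε ^ (q - p) ≤ B * (A / (2 * B)) :=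
    mul_le_mul_of_nonneg_left (le_trans h3 h4) hB.le
  have h7 : B * (A / (2 * B)) = A / 2 := by field_simp
  linarith


/-- If k and l have different parities, the mixture families of noncentral chi-squared
distributions with k and l degrees of freedom are disjoint. -/
theorem mix_ncChiSq_disjoint_of_opposite_parity
    (k l : ℕ) (hk : 1 ≤ k) (hl : 1 ≤ l) (hpar : Odd (k + l)) :
    ¬ ∃ μ : Measure ℝ, InMixNcChiSq k μ ∧ InMixNcChiSq l μ := by
  rintro ⟨μ, h1, h2⟩
  have hne : k ≠ l := by
    rintro rfl
    obtain ⟨m, hm⟩ := hpar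
    omega
  rcases lt_or_gt_of_ne hne with h | h
  · exact mix_aux k l hk hl h μ h1 h2
  · exact mix_aux l k hl hk h μ h2 h1
end

section
/- Let θ ∈ (0,1) have binary expansion θ = Σ_{k=1}^{K} 2^{−j_k} (K finite or infinite), set a_0 = 0 and a_m = Σ_{l=1}^m 2^{−j_l}. In the mixture model where T = a_m with probability (a_m − a_{m−1})/θ and, given T = a_m, X ~ unif(a_{m−1}, a_m), the conditioned moment estimator θ̃ = E[2X | T] = 2T − (gap at T) is unbiased for θ and has variance Var_θ(θ̃) = (1/θ) Σ_{m=1}^{K} a_m a_{m−1} (a_m − a_{m−1}). -/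
open MeasureTheory Set

/-- The uniform distribution on the interval (a,b). -/
noncomputable def unif (a b : ℝ) : Measure ℝ :=
  (ENNReal.ofReal (b - a))⁻¹ • volume.restrict (Set.Ioo a b)

/-- Joint law of (T, X): T takes the value m with probability (a(m+1) − a m)/θ and,
given T = m, X ~ unif(a m, a (m+1)). -/
noncomputable def jointLawUnif (θ : ℝ) (a : ℕ → ℝ) : Measure (ℕ × ℝ) :=
  Measure.sum (fun m : ℕ =>
    ENNReal.ofReal ((a (m + 1) - a m) / θ) • (Measure.dirac m).prod (unif (a m) (a (m + 1))))

instance unif_sfinite (a b : ℝ) : SFinite (unif a b) := by unfold unif; infer_instance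

lemma unif_univ_of_lt {a b : ℝ} (h : a < b) : unif a b Set.univ = 1 := by
  simp only [unif, Measure.smul_apply, Measure.restrict_apply MeasurableSet.univ,
    Set.univ_inter, Real.volume_Ioo, smul_eq_mul]
  rw [ENNReal.inv_mul_cancel (by simp [ENNReal.ofReal_eq_zero]; linarith) ENNReal.ofReal_ne_top]

lemma unif_self (a : ℝ) : unif a a = 0 := by
  simp [unif]

lemma unif_integral_two_x {a b : ℝ} (h : a < b) : ∫ x, 2 * x ∂unif a b = b + a := by
  have hne : b - a ≠ 0 := sub_ne_zero.mpr h.ne'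
  rw [unif, integral_smul_measure]
  rw [show ∫ x in Set.Ioo a b, 2 * x = ∫ x in a..b, 2 * x by
    rw [intervalIntegral.integral_of_le h.le, integral_Ioc_eq_integral_Ioo]]
  have : ∫ x in a..b, 2 * x = b ^ 2 - a ^ 2 := by
    rw [intervalIntegral.integral_const_mul, integral_id]; ring
  rw [this, ENNReal.toReal_inv, ENNReal.toReal_ofReal (by linarith)]
  field_simp
  rw [smul_eq_mul, show b ^ 2 - a ^ 2 = (b + a) * (b - a) by ring, one_div, mul_comm, mul_assoc,
    mul_inv_cancel₀ hne, mul_one]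

lemma joint_lintegral (θ : ℝ) (a : ℕ → ℝ) (f : ℕ → ENNReal) :
    ∫⁻ p : ℕ × ℝ, f p.1 ∂jointLawUnif θ a
      = ∑' m, ENNReal.ofReal ((a (m + 1) - a m) / θ)
          * (f m * unif (a m) (a (m + 1)) Set.univ) := by
  rw [jointLawUnif, lintegral_sum_measure]
  congr 1
  ext m
  rw [lintegral_smul_measure, Measure.dirac_prod,
    lintegral_map (f := fun p : ℕ × ℝ => f p.1)
      ((measurable_from_top (f := f)).comp measurable_fst) measurable_prodMk_left]
  simp [lintegral_const]

lemma joint_integral (θ : ℝ) (hθ : 0 < θ) (a : ℕ → ℝ)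
    (hpos : ∀ m : ℕ, a (m + 1) = a m ∨ a m < a (m + 1))
    (h : ℕ → ℝ) (hh : ∀ m, 0 ≤ h m)
    (hs : Summable (fun m => (a (m + 1) - a m) / θ * h m)) :
    ∫ p : ℕ × ℝ, h p.1 ∂jointLawUnif θ a = ∑' m, (a (m + 1) - a m) / θ * h m := by
  have hmeas : AEStronglyMeasurable (fun p : ℕ × ℝ => h p.1) (jointLawUnif θ a) :=
    ((measurable_from_top (f := h)).comp measurable_fst).aestronglyMeasurable
  rw [integral_eq_lintegral_of_nonneg_ae (f := fun p : ℕ × ℝ => h p.1) (Filter.Eventually.of_forall fun p => hh p.1) hmeas]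
  rw [joint_lintegral θ a (fun m => ENNReal.ofReal (h m))]
  have hterm : ∀ m, ENNReal.ofReal ((a (m + 1) - a m) / θ)
      * (ENNReal.ofReal (h m) * unif (a m) (a (m + 1)) Set.univ)
      = ENNReal.ofReal ((a (m + 1) - a m) / θ * h m) := by
    intro m
    rcases hpos m with heq | hlt
    · rw [heq, unif_self]
      simp
    · rw [unif_univ_of_lt hlt, mul_one,
        ← ENNReal.ofReal_mul (div_nonneg (by linarith) hθ.le)]
  simp_rw [hterm]
  rw [← ENNReal.ofReal_tsum_of_nonneg
    (fun m => mul_nonneg (div_nonneg (by rcases hpos m with h' | h' <;> [simp [h']; linarith]) hθ.le) (hh m)) hs]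
  exact ENNReal.toReal_ofReal (tsum_nonneg fun m =>
    mul_nonneg (div_nonneg (by rcases hpos m with h' | h' <;> [simp [h']; linarith]) hθ.le) (hh m))

/-- For θ ∈ (0,1) with binary expansion partial sums a_m, the conditioned moment
estimator θ̃ = E[2X | T], which equals a_m + a_{m−1} on {T = m}, is unbiased for θ and
has variance (1/θ) Σ_m a_m a_{m−1} (a_m − a_{m−1}). -/
theorem rao_blackwell_uniform_binary
    (θ : ℝ) (hθ : θ ∈ Set.Ioo (0:ℝ) 1)
    (a : ℕ → ℝ) (ha0 : a 0 = 0) (hmono : Monotone a)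
    (hlim : Filter.Tendsto a Filter.atTop (nhds θ))
    (hgap : ∀ m, a (m + 1) - a m = 0 ∨ ∃ j : ℕ, 1 ≤ j ∧ a (m + 1) - a m = ((2:ℝ) ^ j)⁻¹) :
    (∀ m : ℕ, (∫ x, 2 * x ∂unif (a m) (a (m + 1))) * (if a (m+1) = a m then 0 else 1)
        = (a (m + 1) + a m) * (if a (m+1) = a m then 0 else 1)) ∧
    (∫ p : ℕ × ℝ, (a (p.1 + 1) + a p.1) ∂jointLawUnif θ a) = θ ∧
    (∫ p : ℕ × ℝ, (a (p.1 + 1) + a p.1 - θ) ^ 2 ∂jointLawUnif θ a)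
      = (1 / θ) * ∑' m : ℕ, a (m + 1) * a m * (a (m + 1) - a m) := by
  obtain ⟨hθ0, hθ1⟩ := hθ
  have hpos : ∀ m : ℕ, a (m + 1) = a m ∨ a m < a (m + 1) := by
    intro m
    rcases hgap m with h | ⟨j, _, hj⟩
    · exact Or.inl (by linarith)
    · right
      have : (0:ℝ) < ((2:ℝ) ^ j)⁻¹ := by positivity
      linarith
  have ha_nonneg : ∀ n, 0 ≤ a n := fun n => ha0 ▸ hmono (Nat.zero_le n)
  have haθ : ∀ n, a n ≤ θ := fun n => hmono.ge_of_tendsto hlim n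
  have hgge : ∀ m, 0 ≤ a (m + 1) - a m := fun m => sub_nonneg.mpr (hmono (Nat.le_succ m))
  -- telescoping sums
  have htel : ∀ k : ℕ, k ≠ 0 → HasSum (fun m => a (m + 1) ^ k - a m ^ k) (θ ^ k) := by
    intro k hk
    rw [hasSum_iff_tendsto_nat_of_nonneg
      (fun m => sub_nonneg.mpr (pow_le_pow_left₀ (ha_nonneg m) (hmono (Nat.le_succ m)) k)) _]
    have : ∀ n : ℕ, ∑ i ∈ Finset.range n, (a (i + 1) ^ k - a i ^ k) = a n ^ k := by
      intro n
      rw [Finset.sum_range_sub (fun i => a i ^ k), ha0, zero_pow hk, sub_zero]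
    simp_rw [this]
    exact hlim.pow k
  have h1 : HasSum (fun m => a (m + 1) - a m) θ := by
    simpa using htel 1 one_ne_zero
  have h2 := htel 2 two_ne_zero
  have h3 := htel 3 three_ne_zero
  have hvsummable : Summable (fun m => a (m + 1) * a m * (a (m + 1) - a m)) := by
    apply Summable.of_nonneg_of_le
      (fun m => mul_nonneg (mul_nonneg (ha_nonneg _) (ha_nonneg _)) (hgge m))
      (fun m => ?_) h1.summable
    have h1' : a (m + 1) * a m ≤ 1 := by
      have := haθ (m + 1); have := haθ m; nlinarith [ha_nonneg m, ha_nonneg (m+1)]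
    nlinarith [hgge m]
  set V := ∑' m, a (m + 1) * a m * (a (m + 1) - a m) with hV
  have hv : HasSum (fun m => a (m + 1) * a m * (a (m + 1) - a m)) V := hvsummable.hasSum
  refine ⟨?_, ?_, ?_⟩
  · intro m
    rcases hpos m with heq | hlt
    · simp [heq]
    · rw [if_neg hlt.ne', unif_integral_two_x hlt]
  · -- unbiasedness
    have hsum2 : HasSum (fun m => (a (m + 1) - a m) / θ * (a (m + 1) + a m)) θ := by
      have := h2.div_const θ
      have heq : (fun m => (a (m + 1) ^ 2 - a m ^ 2) / θ)
          = fun m => (a (m + 1) - a m) / θ * (a (m + 1) + a m) := by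
        funext m; ring
      rw [heq] at this
      rwa [show θ ^ 2 / θ = θ by field_simp] at this
    rw [joint_integral θ hθ0 a hpos _ (fun m => by have := ha_nonneg m; have := ha_nonneg (m+1); linarith) hsum2.summable]
    exact hsum2.tsum_eq
  · -- variance
    have hsum3 : HasSum (fun m => (a (m + 1) - a m) / θ * (a (m + 1) + a m - θ) ^ 2) (V / θ) := by
      have hcomb : HasSum (fun m => (a (m + 1) ^ 3 - a m ^ 3)
          + a (m + 1) * a m * (a (m + 1) - a m)
          - 2 * θ * (a (m + 1) ^ 2 - a m ^ 2) + θ ^ 2 * (a (m + 1) - a m))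
          (θ ^ 3 + V - 2 * θ * θ ^ 2 + θ ^ 2 * θ) :=
        (((h3.add hv).sub ((h2.mul_left (2 * θ)))).add (h1.mul_left (θ ^ 2)))
      have heq : (fun m => (a (m + 1) ^ 3 - a m ^ 3)
          + a (m + 1) * a m * (a (m + 1) - a m)
          - 2 * θ * (a (m + 1) ^ 2 - a m ^ 2) + θ ^ 2 * (a (m + 1) - a m))
          = fun m => (a (m + 1) - a m) * (a (m + 1) + a m - θ) ^ 2 := by
        funext m; ring
      rw [heq, show θ ^ 3 + V - 2 * θ * θ ^ 2 + θ ^ 2 * θ = V by ring] at hcomb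
      have := hcomb.div_const θ
      have heq2 : (fun m => (a (m + 1) - a m) * (a (m + 1) + a m - θ) ^ 2 / θ)
          = fun m => (a (m + 1) - a m) / θ * (a (m + 1) + a m - θ) ^ 2 := by
        funext m; ring
      rwa [heq2] at this
    rw [joint_integral θ hθ0 a hpos _ (fun m => sq_nonneg _) hsum3.summable]
    rw [hsum3.tsum_eq]
    ring
end
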